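/- arXiv:2207.10301 — 3 statements merged into one kernel-verified Lean document; each statement's English description precedes it below -/
import Mathlib

section
/- Let p and s be integers with 1 ≤ s ≤ p/4. There exists a subset Ω of {0,1}^p such that every w in Ω has exactly s nonzero coordinates, every pair of distinct w, w' in Ω satisfies ‖w - w'‖₂² > s/2, and log |Ω| ≥ 0.233 · s · log(p/s). -/
open Finset


namespace VGaux

/-- Hamming distance on functions. -/
def dd {s m : ℕ} (f g : Fin s → Fin m) : ℕ := (univ.filter fun i => f i ≠ g i).card

lemma dd_comm {s m : ℕ} (f g : Fin s → Fin m) : dd f g = dd g f := by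
  unfold dd
  congr 1
  ext i
  simp [ne_comm]

lemma dd_self {s m : ℕ} (f : Fin s → Fin m) : dd f f = 0 := by
  simp [dd]

/-- Ball counting bound. -/
lemma ball_card_le {s m : ℕ} (c : Fin s → Fin m) (r : ℕ) (hr : r ≤ s) :
    ((univ : Finset (Fin s → Fin m)).filter fun x => dd c x ≤ r).card
      ≤ s.choose r * m ^ r := by
  classical
  set ball := ((univ : Finset (Fin s → Fin m)).filter fun x => dd c x ≤ r) with hball
  have hex : ∀ x : Fin s → Fin m, dd c x ≤ r →
      ∃ B : Finset (Fin s), (univ.filter fun i => c i ≠ x i) ⊆ B ∧ B.card = r := by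
    intro x hx
    obtain ⟨u, h1, _, h3⟩ := Finset.exists_subsuperset_card_eq
      (Finset.subset_univ (univ.filter fun i => c i ≠ x i)) hx (by simpa using hr)
    exact ⟨u, h1, h3⟩
  set A : (Fin s → Fin m) → Finset (Fin s) := fun x =>
    if h : dd c x ≤ r then (hex x h).choose else ∅ with hA
  have hAmem : ∀ x ∈ ball, A x ∈ (univ : Finset (Fin s)).powersetCard r := by
    intro x hx
    rw [hball, mem_filter] at hx
    rw [hA]
    simp only [dif_pos hx.2]
    rw [Finset.mem_powersetCard]
    exact ⟨Finset.subset_univ _, (hex x hx.2).choose_spec.2⟩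
  rw [Finset.card_eq_sum_card_fiberwise hAmem]
  have hfiber : ∀ B ∈ (univ : Finset (Fin s)).powersetCard r,
      (ball.filter fun x => A x = B).card ≤ m ^ r := by
    intro B hB
    rw [Finset.mem_powersetCard] at hB
    have hcard : Fintype.card ((i : B) → Fin m) = m ^ r := by
      rw [Fintype.card_pi]
      simp [hB.2]
    calc (ball.filter fun x => A x = B).card
        ≤ (univ : Finset ((i : B) → Fin m)).card := by
          apply Finset.card_le_card_of_injOn (fun x => fun i : B => x i)
          · intro _ _; exact Finset.mem_univ _
          · intro x hx y hy hxy
            have hx1 : dd c x ≤ r :=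
              (Finset.mem_filter.mp (Finset.mem_of_mem_filter _ hx)).2
            have hx2 : A x = B := (Finset.mem_filter.mp hx).2
            have hy1 : dd c y ≤ r :=
              (Finset.mem_filter.mp (Finset.mem_of_mem_filter _ hy)).2
            have hy2 : A y = B := (Finset.mem_filter.mp hy).2
            have hDx : (univ.filter fun i => c i ≠ x i) ⊆ B := by
              rw [← hx2, hA]; simp only [dif_pos hx1]
              exact (hex x hx1).choose_spec.1
            have hDy : (univ.filter fun i => c i ≠ y i) ⊆ B := by
              rw [← hy2, hA]; simp only [dif_pos hy1]
              exact (hex y hy1).choose_spec.1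
            funext i
            by_cases hi : i ∈ B
            · exact congrFun hxy ⟨i, hi⟩
            · have h1 : c i = x i := by
                by_contra h
                exact hi (hDx (by simp [h]))
              have h2 : c i = y i := by
                by_contra h
                exact hi (hDy (by simp [h]))
              rw [← h1, ← h2]
      _ = m ^ r := by rw [Finset.card_univ, hcard]
  calc ∑ B ∈ (univ : Finset (Fin s)).powersetCard r, (ball.filter fun x => A x = B).card
      ≤ ∑ B ∈ (univ : Finset (Fin s)).powersetCard r, m ^ r :=
        Finset.sum_le_sum hfiber
    _ = s.choose r * m ^ r := by
        rw [Finset.sum_const, Finset.card_powersetCard, Finset.card_univ, Fintype.card_fin,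
          smul_eq_mul]

/-- Existence of a large code with minimum distance > r. -/
lemma exists_code (s m r : ℕ) (hr : r ≤ s) :
    ∃ C : Finset (Fin s → Fin m),
      (∀ f ∈ C, ∀ g ∈ C, f ≠ g → r < dd f g) ∧
      m ^ s ≤ C.card * (s.choose r * m ^ r) := by
  classical
  set G := ((univ : Finset (Fin s → Fin m)).powerset.filter
      (fun C => ∀ f ∈ C, ∀ g ∈ C, f ≠ g → r < dd f g)) with hGdef
  have hne : G.Nonempty := ⟨∅, by simp [hGdef]⟩
  obtain ⟨C, hCG, hmax⟩ := G.exists_max_image Finset.card hne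
  have hCprop : ∀ f ∈ C, ∀ g ∈ C, f ≠ g → r < dd f g := (Finset.mem_filter.mp hCG).2
  refine ⟨C, hCprop, ?_⟩
  have hcover : ∀ x : Fin s → Fin m, ∃ c ∈ C, dd c x ≤ r := by
    intro x
    by_contra hcon
    push_neg at hcon
    have hx : x ∉ C := by
      intro hx
      have := hcon x hx
      rw [dd_self] at this
      omega
    have hins : insert x C ∈ G := by
      rw [hGdef, Finset.mem_filter]
      refine ⟨Finset.mem_powerset.mpr (Finset.subset_univ _), ?_⟩
      intro f hf g hg hfg
      rcases Finset.mem_insert.mp hf with hf1 | hf1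
      · rcases Finset.mem_insert.mp hg with hg1 | hg1
        · exact absurd (hf1.trans hg1.symm) hfg
        · rw [hf1, dd_comm]; exact hcon g hg1
      · rcases Finset.mem_insert.mp hg with hg1 | hg1
        · rw [hg1]; exact hcon f hf1
        · exact hCprop f hf1 g hg1 hfg
    have := hmax _ hins
    rw [Finset.card_insert_of_notMem hx] at this
    omega
  have hsub : (univ : Finset (Fin s → Fin m)) ⊆
      C.biUnion (fun c => univ.filter fun x => dd c x ≤ r) := by
    intro x _
    obtain ⟨c, hc, hcx⟩ := hcover x
    exact Finset.mem_biUnion.mpr ⟨c, hc, by simp [hcx]⟩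
  calc m ^ s = (univ : Finset (Fin s → Fin m)).card := by
        rw [Finset.card_univ, Fintype.card_fun, Fintype.card_fin, Fintype.card_fin]
    _ ≤ (C.biUnion (fun c => univ.filter fun x => dd c x ≤ r)).card :=
        Finset.card_le_card hsub
    _ ≤ ∑ c ∈ C, ((univ : Finset (Fin s → Fin m)).filter fun x => dd c x ≤ r).card :=
        Finset.card_biUnion_le
    _ ≤ ∑ _c ∈ C, s.choose r * m ^ r :=
        Finset.sum_le_sum fun c _ => ball_card_le c r hr
    _ = C.card * (s.choose r * m ^ r) := by rw [Finset.sum_const, smul_eq_mul]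

/-- binomial coefficient bound : choose s r ≤ (4/3)^s * 3^r. -/
lemma choose_le (s r : ℕ) (hr : r ≤ s) :
    (s.choose r : ℝ) ≤ (4/3) ^ s * 3 ^ r := by
  have h := add_pow (1/3 : ℝ) 1 s
  have hterm : (1/3 : ℝ) ^ r * 1 ^ (s - r) * s.choose r
      ≤ ∑ k ∈ Finset.range (s + 1), (1/3 : ℝ) ^ k * 1 ^ (s - k) * s.choose k := by
    apply Finset.single_le_sum (f := fun k => (1/3 : ℝ) ^ k * 1 ^ (s - k) * s.choose k)
    · intro k _; positivity
    · simpa using Nat.lt_succ_of_le hr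
  rw [← h] at hterm
  have h43 : ((1:ℝ)/3 + 1) = 4/3 := by norm_num
  rw [h43] at hterm
  have hterm' : (s.choose r : ℝ) * (1/3)^r ≤ (4/3)^s := by
    have := hterm
    rw [one_pow] at this
    linarith [this]
  have h3r : (0:ℝ) < 3 ^ r := by positivity
  calc (s.choose r : ℝ) = (s.choose r : ℝ) * ((1/3)^r * 3^r) := by
        rw [← mul_pow]; norm_num
    _ = ((s.choose r : ℝ) * (1/3)^r) * 3^r := by ring
    _ ≤ (4/3)^s * 3^r := mul_le_mul_of_nonneg_right hterm' h3r.le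

/-- 3 ≤ exp 1.15 -/
lemma log_three_le : Real.log 3 ≤ 1.15 := by
  rw [Real.log_le_iff_le_exp (by norm_num)]
  have h1 : (2.7182818283 : ℝ) ^ 23 ≤ (Real.exp 1) ^ 23 :=
    pow_le_pow_left₀ (by norm_num) Real.exp_one_gt_d9.le 23
  have e1 : Real.exp 1.15 ^ (20:ℕ) = Real.exp 23 := by
    rw [← Real.exp_nat_mul]; norm_num
  have e2 : Real.exp 1 ^ (23:ℕ) = Real.exp 23 := by
    rw [← Real.exp_nat_mul]; norm_num
  have h2 : (3 : ℝ) ^ (20:ℕ) ≤ Real.exp 1.15 ^ (20:ℕ) := by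
    rw [e1, ← e2]
    calc (3:ℝ)^(20:ℕ) ≤ (2.7182818283 : ℝ) ^ (23:ℕ) := by norm_num
      _ ≤ _ := h1
  exact le_of_pow_le_pow_left₀ (by norm_num) (Real.exp_pos _).le h2

/-- Key numeric inequality. -/
lemma numeric (x : ℝ) (hx : 4 ≤ x) :
    0.233 * Real.log (x + 1) ≤ 0.75 * Real.log x - Real.log (4/3) - 0.25 * Real.log 3 := by
  have hx0 : 0 < x := by linarith
  have h1 : Real.log (x + 1) ≤ Real.log x + 1 / x := by
    have h : Real.log ((x+1)/x) ≤ (x+1)/x - 1 :=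
      Real.log_le_sub_one_of_pos (by positivity)
    have heq : Real.log ((x+1)/x) = Real.log (x+1) - Real.log x :=
      Real.log_div (by linarith) (ne_of_gt hx0)
    have : (x+1)/x - 1 = 1/x := by field_simp; ring
    linarith [heq ▸ this ▸ h]
  have h2 : (1:ℝ)/x ≤ 1/4 := by
    apply div_le_div_of_nonneg_left (by norm_num) (by norm_num) hx
  have h43 : Real.log (4/3) ≤ 1/3 := by
    have := Real.log_le_sub_one_of_pos (show (0:ℝ) < 4/3 by norm_num)
    linarith
  have h3 := log_three_le
  have hlog4 : Real.log 4 ≤ Real.log x := Real.log_le_log (by norm_num) hx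
  have hlog4' : (1.3862943606 : ℝ) ≤ Real.log 4 := by
    have : (4:ℝ) = 2^2 := by norm_num
    rw [this, Real.log_pow]
    have := Real.log_two_gt_d9
    push_cast
    linarith
  nlinarith [Real.log_nonneg (show (1:ℝ) ≤ x by linarith)]

end VGaux

namespace VGaux

lemma block_inj {m i i' a b : ℕ} (ha : a < m) (hb : b < m)
    (h : i * m + a = i' * m + b) : i = i' ∧ a = b := by
  have hm0 : 0 < m := lt_of_le_of_lt (Nat.zero_le _) ha
  have hd : (i * m + a) / m = i := by
    rw [mul_comm, Nat.mul_add_div hm0, Nat.div_eq_of_lt ha, add_zero]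
  have hd' : (i' * m + b) / m = i' := by
    rw [mul_comm, Nat.mul_add_div hm0, Nat.div_eq_of_lt hb, add_zero]
  have hii : i = i' := by rw [← hd, ← hd', h]
  subst hii
  exact ⟨rfl, by omega⟩

noncomputable def emb (p s m : ℕ) (f : Fin s → Fin m) : EuclideanSpace ℝ (Fin p) :=
  WithLp.toLp 2 fun k => if ∃ i : Fin s, (k : ℕ) = (i : ℕ) * m + (f i : ℕ) then 1 else 0

def idx (p s m : ℕ) (hsm : s * m ≤ p) (f : Fin s → Fin m) (i : Fin s) : Fin p :=
  ⟨(i : ℕ) * m + (f i : ℕ), by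
    have h1 : (i : ℕ) * m + (f i : ℕ) < (i : ℕ) * m + m :=
      Nat.add_lt_add_left (f i).isLt _
    have h2 : (i : ℕ) * m + m ≤ s * m := by
      have h3 : ((i : ℕ) + 1) * m ≤ s * m :=
        Nat.mul_le_mul_right _ (Nat.succ_le_of_lt i.isLt)
      have h4 : ((i : ℕ) + 1) * m = (i : ℕ) * m + m := by ring
      omega
    omega⟩

lemma idx_injective (p s m : ℕ) (hsm : s * m ≤ p) (f : Fin s → Fin m) :
    Function.Injective (idx p s m hsm f) := by
  intro i i' h
  have hval : (i : ℕ) * m + (f i : ℕ) = (i' : ℕ) * m + (f i' : ℕ) :=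
    congrArg Fin.val h
  exact Fin.ext (block_inj (f i).isLt (f i').isLt hval).1

lemma emb_eq_one (p s m : ℕ) (hsm : s * m ≤ p) (f : Fin s → Fin m) (i : Fin s) :
    emb p s m f (idx p s m hsm f i) = 1 := by
  unfold emb; simp only [WithLp.ofLp_toLp]
  rw [if_pos ⟨i, rfl⟩]

lemma emb_eq_zero (p s m : ℕ) (hsm : s * m ≤ p) (f g : Fin s → Fin m) (i : Fin s)
    (hi : f i ≠ g i) : emb p s m g (idx p s m hsm f i) = 0 := by
  unfold emb; simp only [WithLp.ofLp_toLp]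
  rw [if_neg]
  rintro ⟨i', hi'⟩
  have hval : (i : ℕ) * m + (f i : ℕ) = (i' : ℕ) * m + (g i' : ℕ) := hi'
  obtain ⟨h1, h2⟩ := block_inj (f i).isLt (g i').isLt hval
  have hii : i = i' := Fin.ext h1
  subst hii
  exact hi (Fin.ext h2)

lemma emb_injective (p s m : ℕ) (hsm : s * m ≤ p) :
    Function.Injective (emb p s m) := by
  intro f g h
  by_contra hfg
  obtain ⟨i, hi⟩ := Function.ne_iff.mp hfg
  have h1 := emb_eq_one p s m hsm f i
  have h0 := emb_eq_zero p s m hsm f g i hi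
  rw [h] at h1
  rw [h1] at h0
  norm_num at h0

lemma emb_support (p s m : ℕ) (hsm : s * m ≤ p) (f : Fin s → Fin m) :
    (univ.filter fun k : Fin p => emb p s m f k ≠ 0) =
      Finset.image (idx p s m hsm f) univ := by
  ext k
  simp only [Finset.mem_filter, Finset.mem_univ, true_and, Finset.mem_image]
  constructor
  · intro hk
    have : ∃ i : Fin s, (k : ℕ) = (i : ℕ) * m + (f i : ℕ) := by
      by_contra hcon
      exact hk (by unfold emb; simp only [WithLp.ofLp_toLp]; rw [if_neg hcon])
    obtain ⟨i, hi⟩ := this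
    exact ⟨i, Fin.ext hi.symm⟩
  · rintro ⟨i, -, rfl⟩
    rw [emb_eq_one p s m hsm f i]
    norm_num

lemma emb_support_card (p s m : ℕ) (hsm : s * m ≤ p) (f : Fin s → Fin m) :
    (univ.filter fun k : Fin p => emb p s m f k ≠ 0).card = s := by
  rw [emb_support p s m hsm f,
    Finset.card_image_of_injective _ (idx_injective p s m hsm f), Finset.card_univ,
    Fintype.card_fin]

lemma emb_dist (p s m : ℕ) (hsm : s * m ≤ p) (f g : Fin s → Fin m) :
    (2 * dd f g : ℝ) ≤ ‖emb p s m f - emb p s m g‖ ^ 2 := by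
  classical
  set x := emb p s m f - emb p s m g with hx
  have hnorm : ‖x‖ ^ 2 = ∑ k, ‖x k‖ ^ 2 := by
    rw [EuclideanSpace.norm_eq, Real.sq_sqrt (by positivity)]
  set D : Finset (Fin s) := univ.filter (fun i => f i ≠ g i) with hD
  set T : Finset (Fin p) := D.image (idx p s m hsm f) ∪ D.image (idx p s m hsm g) with hT
  have hxk : ∀ k ∈ T, ‖x k‖ ^ 2 = 1 := by
    intro k hk
    rcases Finset.mem_union.mp hk with hk | hk
    · obtain ⟨i, hiD, rfl⟩ := Finset.mem_image.mp hk
      have hi : f i ≠ g i := by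
        rw [hD] at hiD; exact (Finset.mem_filter.mp hiD).2
      have hxval : x (idx p s m hsm f i) = 1 - 0 := by
        rw [hx]
        show emb p s m f _ - emb p s m g _ = 1 - 0
        rw [emb_eq_one p s m hsm f i, emb_eq_zero p s m hsm f g i hi]
      rw [hxval]; norm_num
    · obtain ⟨i, hiD, rfl⟩ := Finset.mem_image.mp hk
      have hi : f i ≠ g i := by
        rw [hD] at hiD; exact (Finset.mem_filter.mp hiD).2
      have hxval : x (idx p s m hsm g i) = 0 - 1 := by
        rw [hx]
        show emb p s m f _ - emb p s m g _ = 0 - 1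
        rw [emb_eq_one p s m hsm g i, emb_eq_zero p s m hsm g f i (Ne.symm hi)]
      rw [hxval]; norm_num
  have hdisj : Disjoint (D.image (idx p s m hsm f)) (D.image (idx p s m hsm g)) := by
    rw [Finset.disjoint_left]
    rintro k hkf hkg
    obtain ⟨i, hiD, hif⟩ := Finset.mem_image.mp hkf
    obtain ⟨i', hiD', hig⟩ := Finset.mem_image.mp hkg
    have hval : (i : ℕ) * m + (f i : ℕ) = (i' : ℕ) * m + (g i' : ℕ) := by
      have := hif.trans hig.symm
      exact congrArg Fin.val this
    obtain ⟨h1, h2⟩ := block_inj (f i).isLt (g i').isLt hval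
    have hii : i = i' := Fin.ext h1
    subst hii
    rw [hD] at hiD
    exact (Finset.mem_filter.mp hiD).2 (Fin.ext h2)
  have hTcard : T.card = 2 * dd f g := by
    rw [hT, Finset.card_union_of_disjoint hdisj,
      Finset.card_image_of_injective _ (idx_injective p s m hsm f),
      Finset.card_image_of_injective _ (idx_injective p s m hsm g)]
    rw [hD]
    unfold dd
    ring
  calc (2 * dd f g : ℝ) = ∑ k ∈ T, (1 : ℝ) := by
        rw [Finset.sum_const, hTcard]; push_cast; ring
    _ = ∑ k ∈ T, ‖x k‖ ^ 2 := by
        apply Finset.sum_congr rfl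
        intro k hk; rw [hxk k hk]
    _ ≤ ∑ k, ‖x k‖ ^ 2 := by
        apply Finset.sum_le_sum_of_subset_of_nonneg (Finset.subset_univ T)
        intro k _ _; positivity
    _ = ‖x‖ ^ 2 := hnorm.symm

lemma emb_zero_one (p s m : ℕ) (f : Fin s → Fin m) (k : Fin p) :
    emb p s m f k = 0 ∨ emb p s m f k = 1 := by
  unfold emb; simp only [WithLp.ofLp_toLp]
  split
  · right; rfl
  · left; rfl

end VGaux

/-- Varshamov–Gilbert bound: for integers `1 ≤ s ≤ p/4` there is a set `Ω` of binary
vectors in `{0,1}^p`, each with exactly `s` nonzero coordinates, any two distinct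
elements at squared Euclidean distance more than `s/2`, and `log |Ω| ≥ 0.233 s log(p/s)`. -/
theorem varshamov_gilbert (p s : ℕ) (hs : 1 ≤ s) (hsp : s ≤ p / 4) :
    ∃ Ω : Finset (EuclideanSpace ℝ (Fin p)),
      (∀ w ∈ Ω, (∀ i, w i = 0 ∨ w i = 1) ∧
        (Finset.univ.filter (fun i => w i ≠ 0)).card = s) ∧
      (∀ w ∈ Ω, ∀ w' ∈ Ω, w ≠ w' → (s : ℝ) / 2 < ‖w - w'‖ ^ 2) ∧
      0.233 * s * Real.log ((p : ℝ) / s) ≤ Real.log Ω.card := by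
  classical
  have hs0 : 0 < s := hs
  have h4sp : 4 * s ≤ p := by
    have := (Nat.le_div_iff_mul_le (by norm_num : 0 < 4)).mp hsp
    omega
  set m := p / s with hm
  have h4m : 4 ≤ m := by
    rw [hm, Nat.le_div_iff_mul_le hs0]; omega
  have hm0 : 0 < m := by omega
  have hsm : s * m ≤ p := by rw [hm, mul_comm]; exact Nat.div_mul_le_self p s
  have hpm : p < s * (m + 1) := by
    have h1 : s * m + p % s = p := by rw [hm]; exact Nat.div_add_mod p s
    have h2 : p % s < s := Nat.mod_lt p hs0
    have h3 : s * (m + 1) = s * m + s := Nat.mul_succ s m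
    omega
  set r := s / 4 with hr
  have hrs : r ≤ s := Nat.div_le_self _ _
  obtain ⟨C, hCdist, hCcount⟩ := VGaux.exists_code s m r hrs
  refine ⟨C.image (VGaux.emb p s m), ?_, ?_, ?_⟩
  · intro w hw
    obtain ⟨f, -, rfl⟩ := Finset.mem_image.mp hw
    exact ⟨VGaux.emb_zero_one p s m f, VGaux.emb_support_card p s m hsm f⟩
  · intro w hw w' hw' hne
    obtain ⟨f, hf, rfl⟩ := Finset.mem_image.mp hw
    obtain ⟨g, hg, rfl⟩ := Finset.mem_image.mp hw'
    have hfg : f ≠ g := by rintro rfl; exact hne rfl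
    have hdist := hCdist f hf g hg hfg
    have hd1 : r + 1 ≤ VGaux.dd f g := hdist
    have hlow := VGaux.emb_dist p s m hsm f g
    have hs4 : s < 4 * r + 4 := by rw [hr]; omega
    have hcast : (s : ℝ) < 4 * (r : ℝ) + 4 := by exact_mod_cast hs4
    have hd1' : ((r : ℝ) + 1) ≤ (VGaux.dd f g : ℝ) := by exact_mod_cast hd1
    calc (s : ℝ) / 2 < 2 * ((r : ℝ) + 1) := by linarith
      _ ≤ 2 * (VGaux.dd f g : ℝ) := by linarith
      _ ≤ _ := hlow
  · rw [Finset.card_image_of_injective _ (VGaux.emb_injective p s m hsm)]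
    -- positivity facts
    have hC0 : 0 < C.card := by
      by_contra hcon
      push_neg at hcon
      interval_cases hC : C.card
      · simp at hCcount
        have := pow_pos hm0 s
        omega
    have hch0 : 0 < s.choose r := Nat.choose_pos hrs
    have hreal : ((m : ℝ)) ^ s ≤ (C.card : ℝ) * ((s.choose r : ℝ) * (m : ℝ) ^ r) := by
      exact_mod_cast hCcount
    have hm4 : (4 : ℝ) ≤ (m : ℝ) := by exact_mod_cast h4m
    have hlogm0 : 0 ≤ Real.log m := Real.log_nonneg (by linarith)
    have hlog30 : 0 ≤ Real.log 3 := Real.log_nonneg (by norm_num)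
    -- log of the count inequality
    have hA : (s : ℝ) * Real.log m ≤
        Real.log C.card + Real.log (s.choose r) + (r : ℝ) * Real.log m := by
      have h1 : Real.log ((m : ℝ) ^ s) ≤
          Real.log ((C.card : ℝ) * ((s.choose r : ℝ) * (m : ℝ) ^ r)) :=
        Real.log_le_log (by positivity) hreal
      rw [Real.log_pow] at h1
      have hc1 : ((C.card : ℕ) : ℝ) ≠ 0 := by
        have : (0:ℝ) < ((C.card : ℕ) : ℝ) := by exact_mod_cast hC0
        linarith
      have hc2 : ((s.choose r : ℕ) : ℝ) ≠ 0 := by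
        have : (0:ℝ) < ((s.choose r : ℕ) : ℝ) := by exact_mod_cast hch0
        linarith
      have hc3 : ((m : ℝ)) ^ r ≠ 0 := by positivity
      rw [Real.log_mul hc1 (by positivity), Real.log_mul hc2 hc3, Real.log_pow] at h1
      push_cast at h1 ⊢
      linarith
    -- binomial bound
    have hB : Real.log (s.choose r) ≤ (s : ℝ) * Real.log (4/3) + (r : ℝ) * Real.log 3 := by
      have h1 : Real.log (s.choose r) ≤ Real.log ((4/3 : ℝ) ^ s * 3 ^ r) :=
        Real.log_le_log (by exact_mod_cast hch0) (VGaux.choose_le s r hrs)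
      rw [Real.log_mul (by positivity) (by positivity), Real.log_pow, Real.log_pow] at h1
      push_cast at h1 ⊢
      linarith
    have hD : (r : ℝ) ≤ (s : ℝ) / 4 := by
      have h4 : 4 * r ≤ s := by rw [hr]; omega
      have h5 : ((4 * r : ℕ) : ℝ) ≤ ((s : ℕ) : ℝ) := Nat.cast_le.mpr h4
      push_cast at h5
      linarith
    have hN := VGaux.numeric (m : ℝ) hm4
    -- log (p/s) ≤ log (m+1)
    have hsR' : (0:ℝ) < (s : ℝ) := by exact_mod_cast hs0
    have hps : (p : ℝ) / s ≤ (m : ℝ) + 1 := by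
      have h1 : (p : ℝ) < (s : ℝ) * ((m : ℝ) + 1) := by exact_mod_cast hpm
      rw [div_le_iff₀ hsR']
      calc (p : ℝ) ≤ (s : ℝ) * ((m : ℝ) + 1) := le_of_lt h1
        _ = ((m : ℝ) + 1) * s := mul_comm _ _
    have hps0 : (0 : ℝ) < (p : ℝ) / s := by
      have hp4 : (4 : ℝ) * s ≤ (p : ℝ) := by exact_mod_cast h4sp
      have hp0 : (0:ℝ) < (p : ℝ) := by nlinarith
      positivity
    have hF : Real.log ((p : ℝ) / s) ≤ Real.log ((m : ℝ) + 1) :=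
      Real.log_le_log hps0 hps
    -- combine
    have hsR : (0 : ℝ) ≤ (s : ℝ) := by positivity
    have e1 : 0.233 * (s : ℝ) * Real.log ((p : ℝ) / s)
        ≤ 0.233 * (s : ℝ) * Real.log ((m : ℝ) + 1) := by
      apply mul_le_mul_of_nonneg_left hF (by positivity)
    have e2 : (s : ℝ) * (0.233 * Real.log ((m : ℝ) + 1))
        ≤ (s : ℝ) * (0.75 * Real.log m - Real.log (4/3) - 0.25 * Real.log 3) :=
      mul_le_mul_of_nonneg_left hN hsR
    have e3 : (r : ℝ) * Real.log m ≤ (s : ℝ) / 4 * Real.log m :=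
      mul_le_mul_of_nonneg_right hD hlogm0
    have e4 : (r : ℝ) * Real.log 3 ≤ (s : ℝ) / 4 * Real.log 3 :=
      mul_le_mul_of_nonneg_right hD hlog30
    nlinarith [e1, e2, e3, e4, hA, hB]
end

section
/- Let λ > K + 1 ≥ 2. Then the upper incomplete gamma integral satisfies ∫_{λ}^{∞} u^{K−1} e^{−u} du < λ^K e^{−λ}. -/
open Set MeasureTheory Filter Real

/-- Natalini–Palumbo bound for the upper incomplete gamma function: for an integer
`K ≥ 1` and `λ > K + 1`, `∫_λ^∞ u^{K−1} e^{−u} du < λ^K e^{−λ}`. -/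
theorem upper_incomplete_gamma_bound (K : ℕ) (hK : 1 ≤ K) (l : ℝ)
    (hl : (K : ℝ) + 1 < l) :
    (∫ u in Set.Ioi l, u ^ (K - 1) * Real.exp (-u)) < l ^ K * Real.exp (-l) := by
  set f : ℝ → ℝ := fun u => (u - K) * u ^ (K - 1) * Real.exp (-u) with hf
  set F : ℝ → ℝ := fun u => -(u ^ K * Real.exp (-u)) with hF
  have hlpos : 0 < l := by
    have : (0:ℝ) ≤ K := Nat.cast_nonneg K
    linarith
  have hderiv : ∀ x ∈ Set.Ici l, HasDerivAt F (f x) x := by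
    intro x hx
    have h1 : HasDerivAt (fun u : ℝ => u ^ K) (K * x ^ (K - 1)) x := by
      simpa using hasDerivAt_pow K x
    have h2 : HasDerivAt (fun u : ℝ => Real.exp (-u)) (-Real.exp (-x)) x := by
      simpa using ((hasDerivAt_neg x).exp)
    have := (h1.mul h2).neg
    refine this.congr_deriv ?_
    have hxK : x ^ K = x * x ^ (K - 1) := by
      rw [← pow_succ', Nat.sub_add_cancel hK]
    rw [hf]; simp only [hxK]; ring
  have hpos : ∀ x ∈ Set.Ioi l, 0 ≤ f x := by
    intro x hx
    have hxl : l < x := hx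
    have : (0:ℝ) ≤ x - K := by linarith
    have hx0 : (0:ℝ) ≤ x := by linarith
    positivity
  have htend : Tendsto F atTop (nhds 0) := by
    have := tendsto_pow_mul_exp_neg_atTop_nhds_zero K
    simpa [hF, Real.exp_neg] using this.neg
  have hint : ∫ x in Set.Ioi l, f x = 0 - F l :=
    integral_Ioi_of_hasDerivAt_of_nonneg' hderiv hpos htend
  have hfint : IntegrableOn f (Set.Ioi l) :=
    integrableOn_Ioi_deriv_of_nonneg' hderiv hpos htend
  -- the integrand of interest
  set h : ℝ → ℝ := fun u => u ^ (K - 1) * Real.exp (-u) with hh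
  have hhle : ∀ x ∈ Set.Ioi l, h x ≤ f x := by
    intro x hx
    have hxl : l < x := hx
    have hx0 : (0:ℝ) ≤ x := by linarith
    have h1 : (1:ℝ) ≤ x - K := by linarith
    have : 1 * (x ^ (K - 1) * Real.exp (-x)) ≤ (x - K) * (x ^ (K - 1) * Real.exp (-x)) := by
      apply mul_le_mul_of_nonneg_right h1; positivity
    calc h x = 1 * (x ^ (K - 1) * Real.exp (-x)) := by ring
    _ ≤ (x - K) * (x ^ (K - 1) * Real.exp (-x)) := this
    _ = f x := by rw [hf]; ring
  have hhnn : ∀ x ∈ Set.Ioi l, 0 ≤ h x := by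
    intro x hx
    have hxl : l < x := hx
    have hx0 : (0:ℝ) ≤ x := by linarith
    positivity
  have hcontL : ∀ s : Set ℝ, ContinuousOn h s := by
    intro s
    apply Continuous.continuousOn
    exact (continuous_pow _).mul (Real.continuous_exp.comp continuous_neg)
  have hhint : IntegrableOn h (Set.Ioi l) := by
    apply hfint.mono' ((hcontL _).aestronglyMeasurable measurableSet_Ioi)
    filter_upwards [ae_restrict_mem measurableSet_Ioi] with x hx
    rw [Real.norm_eq_abs, abs_of_nonneg (hhnn x hx)]
    exact hhle x hx
  -- strict inequality via positive integral of the difference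
  have hgint : IntegrableOn (fun x => f x - h x) (Set.Ioi l) := hfint.sub hhint
  have hdiffpos : 0 < ∫ x in Set.Ioi l, (f x - h x) := by
    rw [setIntegral_pos_iff_support_of_nonneg_ae ?_ hgint]
    · have hsub : Set.Ioi (l+1) ⊆ (Function.support fun x => f x - h x) ∩ Set.Ioi l := by
        intro x hx
        have hx1 : l + 1 < x := hx
        have hKx : (0:ℝ) ≤ K := Nat.cast_nonneg K
        constructor
        · simp only [Function.mem_support]
          have hx0 : (0:ℝ) < x := by linarith
          have heq : f x - h x = (x - K - 1) * (x ^ (K - 1) * Real.exp (-x)) := by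
            rw [hf, hh]; ring
          rw [heq]
          have h2 : (0:ℝ) < x - K - 1 := by linarith
          positivity
        · show l < x; linarith
      calc (0:ENNReal) < volume (Set.Ioi (l+1)) := by simp [Real.volume_Ioi]
        _ ≤ _ := measure_mono hsub
    · filter_upwards [ae_restrict_mem measurableSet_Ioi] with x hx
      exact sub_nonneg.mpr (hhle x hx)
  have key : (∫ x in Set.Ioi l, h x) < ∫ x in Set.Ioi l, f x := by
    have := integral_sub hfint hhint
    have h2 : (∫ x in Set.Ioi l, f x) - ∫ x in Set.Ioi l, h x > 0 := by
      rw [← this]; exact hdiffpos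
    linarith
  calc (∫ u in Set.Ioi l, u ^ (K - 1) * Real.exp (-u)) = ∫ x in Set.Ioi l, h x := rfl
  _ < ∫ x in Set.Ioi l, f x := key
  _ = 0 - F l := hint
  _ = l ^ K * Real.exp (-l) := by rw [hF]; ring
end

section
/- For any two matrices O₁, O₂ ∈ ℝ^{n×r} with orthonormal columns, the Frobenius sine-theta distance satisfies ‖sin Θ(O₁,O₂)‖_F ≤ inf_{V ∈ O(r)} ‖O₁ − O₂V‖_F ≤ √2 · ‖sin Θ(O₁,O₂)‖_F, where the infimum is over r×r orthogonal matrices V. -/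
open Finset Matrix

/-- Frobenius norm of a real matrix. -/
noncomputable def frobNorm' {m k : ℕ} (M : Matrix (Fin m) (Fin k) ℝ) : ℝ :=
  Real.sqrt (∑ i, ∑ j, M i j ^ 2)

lemma proj_contract {n r : ℕ} (O : Matrix (Fin n) (Fin r) ℝ) (h : O.transpose * O = 1)
    (z : Fin n → ℝ) :
    (O.transpose *ᵥ z) ⬝ᵥ (O.transpose *ᵥ z) ≤ z ⬝ᵥ z := by
  have h0 : 0 ≤ (z - O *ᵥ (O.transpose *ᵥ z)) ⬝ᵥ (z - O *ᵥ (O.transpose *ᵥ z)) := by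
    apply Finset.sum_nonneg; intro i _; exact mul_self_nonneg _
  have key : ∀ w : Fin r → ℝ, z ⬝ᵥ (O *ᵥ w) = (O.transpose *ᵥ z) ⬝ᵥ w := by
    intro w
    rw [Matrix.dotProduct_mulVec, Matrix.mulVec_transpose]
  have key2 : (O *ᵥ (O.transpose *ᵥ z)) ⬝ᵥ z = (O.transpose *ᵥ z) ⬝ᵥ (O.transpose *ᵥ z) := by
    rw [dotProduct_comm, key]
  have key3 : (O *ᵥ (O.transpose *ᵥ z)) ⬝ᵥ (O *ᵥ (O.transpose *ᵥ z))
      = (O.transpose *ᵥ z) ⬝ᵥ (O.transpose *ᵥ z) := by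
    rw [Matrix.dotProduct_mulVec, ← Matrix.mulVec_transpose, Matrix.mulVec_mulVec,
      Matrix.mulVec_mulVec, h, Matrix.one_mul]
  rw [sub_dotProduct, dotProduct_sub, dotProduct_sub, key, key2, key3] at h0
  linarith

lemma sum_mul_eq_trace {n r : ℕ} (X Y : Matrix (Fin n) (Fin r) ℝ) :
    ∑ i, ∑ j, X i j * Y i j = Matrix.trace (X.transpose * Y) := by
  rw [Matrix.trace]
  simp only [Matrix.diag, Matrix.mul_apply, Matrix.transpose_apply]
  rw [Finset.sum_comm]

lemma exists_good_V {n r : ℕ} (O₁ O₂ : Matrix (Fin n) (Fin r) ℝ)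
    (h₁ : O₁.transpose * O₁ = 1) (h₂ : O₂.transpose * O₂ = 1) :
    ∃ V : Matrix (Fin r) (Fin r) ℝ, V.transpose * V = 1 ∧
      ∑ i, ∑ j, ((O₁.transpose * O₂) i j) ^ 2 ≤ Matrix.trace (O₁.transpose * O₂ * V) := by
  set A : Matrix (Fin r) (Fin r) ℝ := O₁.transpose * O₂ with hA
  have hH : (A * A.transpose).IsHermitian := by
    simpa using Matrix.isHermitian_mul_conjTranspose_self A
  set lam : Fin r → ℝ := hH.eigenvalues with hlamdef
  set u : Fin r → (Fin r → ℝ) := fun j => ⇑(hH.eigenvectorBasis j) with hudef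
  have hmul : ∀ j, (A * A.transpose) *ᵥ u j = lam j • u j := fun j => hH.mulVec_eigenvectorBasis j
  have hu_orth : ∀ i j, u i ⬝ᵥ u j = if i = j then 1 else 0 := by
    intro i j
    have := orthonormal_iff_ite.mp hH.eigenvectorBasis.orthonormal i j
    rw [← this]
    simp [hudef, PiLp.inner_apply, dotProduct, mul_comm]
  set w : Fin r → (Fin r → ℝ) := fun j => A.transpose *ᵥ u j with hwdef
  have hw : ∀ i j, w i ⬝ᵥ w j = lam j * (if i = j then 1 else 0) := by
    intro i j
    have e : w i ⬝ᵥ w j = u i ⬝ᵥ ((A * A.transpose) *ᵥ u j) := by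
      simp only [hwdef]
      rw [Matrix.mulVec_transpose A (u i), ← Matrix.dotProduct_mulVec, Matrix.mulVec_mulVec]
    rw [e, hmul j, dotProduct_smul, smul_eq_mul, hu_orth]
  have hwself : ∀ j, w j ⬝ᵥ w j = lam j := by
    intro j
    have := hw j j
    simp only [eq_self_iff_true, if_true, mul_one] at this
    exact this
  have hlam0 : ∀ j, 0 ≤ lam j := by
    intro j
    rw [← hwself j]
    exact Finset.sum_nonneg fun i _ => mul_self_nonneg _
  have hlam1 : ∀ j, lam j ≤ 1 := by
    intro j
    have hw2 : w j = O₂.transpose *ᵥ (O₁ *ᵥ u j) := by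
      simp only [hwdef, hA, Matrix.transpose_mul, Matrix.transpose_transpose,
        ← Matrix.mulVec_mulVec]
    have hc : w j ⬝ᵥ w j ≤ (O₁ *ᵥ u j) ⬝ᵥ (O₁ *ᵥ u j) := by
      rw [hw2]; exact proj_contract O₂ h₂ _
    have hz : (O₁ *ᵥ u j) ⬝ᵥ (O₁ *ᵥ u j) = 1 := by
      rw [Matrix.dotProduct_mulVec, ← Matrix.mulVec_transpose, Matrix.mulVec_mulVec, h₁,
        Matrix.one_mulVec]
      simpa using hu_orth j j
    rw [hwself j, hz] at hc
    exact hc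
  -- the matrix U of eigenvectors
  set U : Matrix (Fin r) (Fin r) ℝ := Matrix.of (fun i j => u j i) with hUdef
  have hU : U.transpose * U = 1 := by
    ext p q
    simp only [Matrix.mul_apply, Matrix.transpose_apply, hUdef, Matrix.of_apply,
      Matrix.one_apply]
    simpa [dotProduct] using hu_orth p q
  have hUU : U * U.transpose = 1 := mul_eq_one_comm.mp hU
  -- sum of eigenvalues equals the Frobenius norm squared of A
  have hsum : ∑ j, lam j = ∑ i, ∑ j, (A i j) ^ 2 := by
    have e1 : ∀ j, (U.transpose * ((A * A.transpose) * U)) j j = lam j := by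
      intro j
      have hcol : ∀ i, ((A * A.transpose) * U) i j = lam j * u j i := by
        intro i
        have e : ((A * A.transpose) * U) i j = ((A * A.transpose) *ᵥ u j) i := by
          simp [Matrix.mul_apply, Matrix.mulVec, dotProduct, hUdef]
        rw [e, hmul j]; simp
      calc (U.transpose * ((A * A.transpose) * U)) j j
          = ∑ i, u j i * ((A * A.transpose) * U) i j := by
            simp [Matrix.mul_apply, hUdef]
        _ = lam j * ∑ i, u j i * u j i := by
            rw [Finset.mul_sum]
            exact Finset.sum_congr rfl fun i _ => by rw [hcol i]; ring
        _ = lam j := by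
            rw [show ∑ i, u j i * u j i = u j ⬝ᵥ u j from rfl, hu_orth j j]; simp
    have e2 : ∑ j, lam j = Matrix.trace (U.transpose * ((A * A.transpose) * U)) := by
      rw [Matrix.trace]
      exact (Finset.sum_congr rfl fun j _ => (e1 j).symm)
    rw [e2, Matrix.trace_mul_comm, Matrix.mul_assoc, hUU, Matrix.mul_one,
      Matrix.trace_mul_comm, ← sum_mul_eq_trace]
    exact Finset.sum_congr rfl fun i _ => Finset.sum_congr rfl fun j _ => (sq (A i j)).symm
  -- orthonormal family on the support of lam
  set s : Set (Fin r) := {j | lam j ≠ 0} with hsdef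
  set v : Fin r → EuclideanSpace ℝ (Fin r) :=
    fun j => (WithLp.toLp 2 ((Real.sqrt (lam j))⁻¹ • w j) : EuclideanSpace ℝ (Fin r)) with hvdef
  have hv_orth : Orthonormal ℝ (s.restrict v) := by
    rw [orthonormal_iff_ite]
    rintro ⟨i, hi⟩ ⟨j, hj⟩
    change inner ℝ (v i) (v j) = if (⟨i, hi⟩ : s) = ⟨j, hj⟩ then 1 else 0
    have e : (inner ℝ (v i) (v j) : ℝ)
        = (Real.sqrt (lam i))⁻¹ * ((Real.sqrt (lam j))⁻¹ * (w i ⬝ᵥ w j)) := by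
      simp only [hvdef, PiLp.inner_apply, RCLike.inner_apply, conj_trivial, PiLp.smul_apply,
        smul_eq_mul, dotProduct, Finset.mul_sum]
      exact Finset.sum_congr rfl fun k _ => by
        simp only [Pi.smul_apply, smul_eq_mul]; ring
    rw [e, hw]
    by_cases hij : i = j
    · subst hij
      have h0 : 0 < lam i := lt_of_le_of_ne (hlam0 i) (Ne.symm hi)
      have hs' : Real.sqrt (lam i) * Real.sqrt (lam i) = lam i := Real.mul_self_sqrt (hlam0 i)
      have hsne : Real.sqrt (lam i) ≠ 0 := ne_of_gt (Real.sqrt_pos.mpr h0)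
      simp only [eq_self_iff_true, if_true, mul_one, Subtype.mk.injEq]
      field_simp
      rw [Real.sq_sqrt (hlam0 i)]
    · simp [hij]
  have hcard : Module.finrank ℝ (EuclideanSpace ℝ (Fin r)) = Fintype.card (Fin r) := by
    simp
  obtain ⟨b, hb⟩ := hv_orth.exists_orthonormalBasis_extension_of_card_eq hcard
  set B : Matrix (Fin r) (Fin r) ℝ := Matrix.of (fun i k => b k i) with hBdef
  have hB : B.transpose * B = 1 := by
    ext p q
    have := orthonormal_iff_ite.mp b.orthonormal p q
    simp only [PiLp.inner_apply, RCLike.inner_apply, conj_trivial] at this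
    simp only [Matrix.mul_apply, Matrix.transpose_apply, hBdef, Matrix.of_apply,
      Matrix.one_apply]
    rw [← this]; exact Finset.sum_congr rfl fun _ _ => mul_comm _ _
  refine ⟨B * U.transpose, ?_, ?_⟩
  · rw [Matrix.transpose_mul, Matrix.transpose_transpose, Matrix.mul_assoc,
      ← Matrix.mul_assoc B.transpose, hB, Matrix.one_mul, hUU]
  · -- trace computation
    have tr_eq : Matrix.trace (A * (B * U.transpose)) = ∑ k, w k ⬝ᵥ ⇑(b k) := by
      rw [← Matrix.mul_assoc, Matrix.trace_mul_comm, Matrix.trace]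
      apply Finset.sum_congr rfl
      intro k _
      simp only [Matrix.diag, Matrix.mul_apply, Matrix.transpose_apply, hUdef, hBdef,
        Matrix.of_apply, dotProduct, hwdef, Matrix.mulVec, Finset.sum_mul, Finset.mul_sum]
      rw [Finset.sum_comm]
      exact Finset.sum_congr rfl fun j _ => Finset.sum_congr rfl fun i _ => by
        ring
    have term : ∀ k, w k ⬝ᵥ ⇑(b k) = Real.sqrt (lam k) := by
      intro k
      by_cases hk : lam k = 0
      · have hwk : w k = 0 := by
          apply dotProduct_self_eq_zero.mp
          rw [hwself k, hk]
        rw [hwk, hk]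
        simp
      · have hbk : b k = v k := hb k hk
        rw [hbk]
        have : (⇑(v k) : Fin r → ℝ) = fun j => (Real.sqrt (lam k))⁻¹ * w k j := rfl
        rw [this]
        have e : w k ⬝ᵥ (fun j => (Real.sqrt (lam k))⁻¹ * w k j)
            = (Real.sqrt (lam k))⁻¹ * (w k ⬝ᵥ w k) := by
          simp [dotProduct, Finset.mul_sum]
          exact Finset.sum_congr rfl fun j _ => by ring
        rw [e, hwself k]
        have h0 : 0 < lam k := lt_of_le_of_ne (hlam0 k) (Ne.symm hk)
        have hs' : Real.sqrt (lam k) * Real.sqrt (lam k) = lam k := Real.mul_self_sqrt (hlam0 k)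
        have hsne : Real.sqrt (lam k) ≠ 0 := ne_of_gt (Real.sqrt_pos.mpr h0)
        field_simp
        rw [Real.sq_sqrt (hlam0 k)]
    rw [tr_eq]
    calc ∑ i, ∑ j, (A i j) ^ 2 = ∑ k, lam k := hsum.symm
      _ ≤ ∑ k, Real.sqrt (lam k) := by
          apply Finset.sum_le_sum
          intro k _
          have h1 : Real.sqrt (lam k) ^ 2 = lam k := Real.sq_sqrt (hlam0 k)
          have h2 : Real.sqrt (lam k) ≤ 1 := by
            rw [show (1:ℝ) = Real.sqrt 1 by simp]
            exact Real.sqrt_le_sqrt (hlam1 k)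
          nlinarith [Real.sqrt_nonneg (lam k)]
      _ = ∑ k, w k ⬝ᵥ ⇑(b k) := Finset.sum_congr rfl fun k _ => (term k).symm


lemma frob_sq_eq {n r : ℕ} (O₁ O₂ : Matrix (Fin n) (Fin r) ℝ)
    (h₁ : O₁.transpose * O₁ = 1) (h₂ : O₂.transpose * O₂ = 1)
    (V : Matrix (Fin r) (Fin r) ℝ) (hV : V.transpose * V = 1) :
    ∑ i, ∑ j, ((O₁ - O₂ * V) i j) ^ 2
      = 2 * r - 2 * Matrix.trace (O₁.transpose * O₂ * V) := by
  have e1 : ∑ i, ∑ j, (O₁ i j) * (O₁ i j) = (r : ℝ) := by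
    rw [sum_mul_eq_trace, h₁, Matrix.trace_one]; simp
  have e2 : ∑ i, ∑ j, ((O₂*V) i j) * ((O₂*V) i j) = (r : ℝ) := by
    rw [sum_mul_eq_trace, Matrix.transpose_mul, Matrix.mul_assoc, ← Matrix.mul_assoc O₂.transpose,
      h₂, Matrix.one_mul, hV, Matrix.trace_one]; simp
  have e3 : ∑ i, ∑ j, (O₁ i j) * ((O₂*V) i j) = Matrix.trace (O₁.transpose * O₂ * V) := by
    rw [sum_mul_eq_trace, Matrix.mul_assoc]
  have expand : ∀ i j, ((O₁ - O₂ * V) i j) ^ 2 =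
      (O₁ i j)*(O₁ i j) - 2*((O₁ i j) * ((O₂*V) i j)) + ((O₂*V) i j)*((O₂*V) i j) := by
    intro i j; simp [Matrix.sub_apply]; ring
  simp only [expand, Finset.sum_add_distrib, Finset.sum_sub_distrib, ← Finset.mul_sum]
  rw [e1, e2, e3]; ring

lemma trace_AV_le {r : ℕ} (A V : Matrix (Fin r) (Fin r) ℝ) :
    2 * Matrix.trace (A * V) ≤ r + ∑ i, ∑ j, ((A*V) i j)^2 := by
  have swap : ∑ i, ∑ j, ((A*V) i j)^2 = ∑ j, ∑ i, ((A*V) i j)^2 := Finset.sum_comm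
  rw [swap, Matrix.trace]
  have key : ∀ j : Fin r, 2 * (A*V).diag j ≤ 1 + ∑ i, ((A*V) i j)^2 := by
    intro j
    have h1 : ((A*V) j j)^2 ≤ ∑ i, ((A*V) i j)^2 :=
      Finset.single_le_sum (f := fun i => ((A*V) i j)^2) (fun i _ => sq_nonneg _)
        (Finset.mem_univ j)
    have h2 : 2 * (A*V) j j ≤ 1 + ((A*V) j j)^2 := by nlinarith [sq_nonneg ((A*V) j j - 1)]
    simpa [Matrix.diag] using h2.trans (by linarith)
  calc 2 * ∑ j, (A*V).diag j = ∑ j : Fin r, 2 * (A*V).diag j := by rw [Finset.mul_sum]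
    _ ≤ ∑ j : Fin r, (1 + ∑ i, ((A*V) i j)^2) := Finset.sum_le_sum (fun j _ => key j)
    _ = r + ∑ j, ∑ i, ((A*V) i j)^2 := by rw [Finset.sum_add_distrib]; simp

lemma frob_mul_orth {r : ℕ} (A V : Matrix (Fin r) (Fin r) ℝ) (hV : V.transpose * V = 1) :
    ∑ i, ∑ j, ((A*V) i j)^2 = ∑ i, ∑ j, (A i j)^2 := by
  have hVV : V * V.transpose = 1 := mul_eq_one_comm.mp hV
  have sq_eq : ∀ (M : Matrix (Fin r) (Fin r) ℝ),
      ∑ i, ∑ j, (M i j)^2 = Matrix.trace (M.transpose * M) := by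
    intro M
    rw [← sum_mul_eq_trace]
    exact Finset.sum_congr rfl fun i _ => Finset.sum_congr rfl fun j _ => sq (M i j)
  rw [sq_eq, sq_eq, Matrix.transpose_mul, Matrix.trace_mul_comm, Matrix.mul_assoc,
    ← Matrix.mul_assoc V, hVV, Matrix.one_mul, Matrix.trace_mul_comm]

/-- Relation between the Frobenius sine-theta distance and the orthogonal Procrustes
distance: for `O₁, O₂ ∈ ℝ^{n×r}` with orthonormal columns,
`‖sin Θ(O₁,O₂)‖_F ≤ inf_{V ∈ O(r)} ‖O₁ − O₂V‖_F ≤ √2 ‖sin Θ(O₁,O₂)‖_F`, where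
`‖sin Θ(O₁,O₂)‖_F² = r − ‖O₁ᵀO₂‖_F²`. -/
theorem sinTheta_procrustes (n r : ℕ)
    (O₁ O₂ : Matrix (Fin n) (Fin r) ℝ)
    (h₁ : O₁.transpose * O₁ = 1) (h₂ : O₂.transpose * O₂ = 1) :
    Real.sqrt ((r : ℝ) - ∑ i, ∑ j, ((O₁.transpose * O₂) i j) ^ 2) ≤
        sInf {x : ℝ | ∃ V : Matrix (Fin r) (Fin r) ℝ,
          V.transpose * V = 1 ∧ x = frobNorm' (O₁ - O₂ * V)} ∧
      sInf {x : ℝ | ∃ V : Matrix (Fin r) (Fin r) ℝ,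
          V.transpose * V = 1 ∧ x = frobNorm' (O₁ - O₂ * V)} ≤
        Real.sqrt 2 * Real.sqrt ((r : ℝ) - ∑ i, ∑ j, ((O₁.transpose * O₂) i j) ^ 2) := by
  set A : Matrix (Fin r) (Fin r) ℝ := O₁.transpose * O₂ with hA
  set F : ℝ := ∑ i, ∑ j, (A i j) ^ 2 with hF
  set S : Set ℝ := {x : ℝ | ∃ V : Matrix (Fin r) (Fin r) ℝ,
      V.transpose * V = 1 ∧ x = frobNorm' (O₁ - O₂ * V)} with hS
  have hne : S.Nonempty := by
    refine ⟨frobNorm' (O₁ - O₂ * 1), 1, ?_, rfl⟩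
    simp
  have hbdd : BddBelow S := by
    refine ⟨0, ?_⟩
    rintro x ⟨V, hV, rfl⟩
    exact Real.sqrt_nonneg _
  constructor
  · apply le_csInf hne
    rintro x ⟨V, hV, rfl⟩
    unfold frobNorm'
    apply Real.sqrt_le_sqrt
    rw [frob_sq_eq O₁ O₂ h₁ h₂ V hV]
    have h3 := trace_AV_le A V
    rw [frob_mul_orth A V hV] at h3
    rw [← hF] at h3
    linarith
  · obtain ⟨V, hV, hge⟩ := exists_good_V O₁ O₂ h₁ h₂
    have hmem : frobNorm' (O₁ - O₂ * V) ∈ S := ⟨V, hV, rfl⟩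
    refine le_trans (csInf_le hbdd hmem) ?_
    unfold frobNorm'
    rw [← Real.sqrt_mul (by norm_num : (0:ℝ) ≤ 2)]
    apply Real.sqrt_le_sqrt
    rw [frob_sq_eq O₁ O₂ h₁ h₂ V hV]
    rw [← hF] at hge
    linarith
end
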